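/- Let n ≥ 1 and let K be a field of characteristic zero. For the cochain complex (C^•, d) of ordered partitions of {1,…,n}, the top cohomology H^n(C) = C^n / im(d : C^{n−1} → C^n) is a one-dimensional K-vector space. (Note C^{n+1} = 0, so every element of C^n is closed.) -/

import Mathlib

/-!
The cochain complex of ordered partitions of `{1,…,n}` (the multidegree-`(1,…,1)` part of
the cobar construction of the polynomial coalgebra `K[t₁,…,tₙ]`).

An ordered partition of `{1,…,n}` (modeled on `Fin n`) into `k` blocks is a tuple
`(B₁,…,B_k)` of pairwise disjoint nonempty subsets covering `{1,…,n}`; equivalently,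
every block is nonempty and every element lies in exactly one block.
-/

/-- `B : Fin k → Finset (Fin n)` is an ordered partition: all blocks are nonempty and
every element of `{1,…,n}` lies in exactly one block (this encodes pairwise disjointness
together with the covering property). -/
def IsOrderedPartition (n k : ℕ) (B : Fin k → Finset (Fin n)) : Prop :=
  (∀ i, (B i).Nonempty) ∧ ∀ x : Fin n, ∃! i, x ∈ B i

/-- The set of ordered partitions of `{1,…,n}` into `k` blocks. -/
def OrderedPartition (n k : ℕ) : Type :=
  {B : Fin k → Finset (Fin n) // IsOrderedPartition n k B}

/-- `C^k`, the free `K`-vector space on the set of ordered partitions of `{1,…,n}`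
into `k` blocks. -/
abbrev OPC (K : Type*) [Field K] (n k : ℕ) : Type _ :=
  OrderedPartition n k →₀ K

/-- Replace the `i`-th block of the tuple `B` by the two consecutive blocks `A`, `A'`
(at positions `i` and `i+1`), shifting the later blocks by one. -/
def splitBlocks {n k : ℕ} (B : Fin k → Finset (Fin n)) (i : Fin k)
    (A A' : Finset (Fin n)) : Fin (k + 1) → Finset (Fin n) :=
  Function.update (i.succ.insertNth A' B) i.castSucc A

open Classical in
/-- The differential `d : C^k → C^{k+1}`.  On a basis ordered partition `(B₁,…,B_k)` it is
`d(B₁,…,B_k) = Σ_{i} (−1)^{i} Σ_{(A,A')} (B₁,…,B_{i−1}, A, A', B_{i+1},…,B_k)`, the inner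
sum running over all ordered pairs `(A, A')` of disjoint nonempty subsets with
`A ∪ A' = B_i` (such a pair is the same as a subset `A ⊆ B_i` with `A' = B_i \ A`;
the resulting tuple is an ordered partition exactly when both `A` and `A'` are nonempty,
which is what the `dite` below selects).  Here `i` runs over `Fin k` (zero-based), so the
sign `(−1)^i` matches the one-based sign `(−1)^{i−1}` of the informal statement. -/
noncomputable def dOP (K : Type*) [Field K] (n k : ℕ) :
    OPC K n k →ₗ[K] OPC K n (k + 1) :=
  Finsupp.lsum K fun B => LinearMap.toSpanSingleton K _ <|
    ∑ i : Fin k, ∑ A ∈ (B.1 i).powerset,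
      if h : IsOrderedPartition n (k + 1) (splitBlocks B.1 i A (B.1 i \ A)) then
        ((-1 : K) ^ (i : ℕ)) • Finsupp.single (⟨_, h⟩ : OrderedPartition n (k + 1)) (1 : K)
      else 0

----------------------------------------------------------------
-- Part 1: partitions into n blocks are permutations
----------------------------------------------------------------
namespace OPaux

open Finset

/-- In an ordered partition of `Fin n` into `n` blocks, each block is a singleton. -/
lemma card_eq_one {n : ℕ} (B : OrderedPartition n n) (i : Fin n) : (B.1 i).card = 1 := by
  classical
  have hdisj : ((Finset.univ : Finset (Fin n)) : Set (Fin n)).PairwiseDisjoint B.1 := by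
    intro a _ b _ hab
    simp only [Finset.disjoint_left]
    intro x hxa hxb
    exact hab ((B.2.2 x).unique hxa hxb)
  have hcover : Finset.univ.biUnion B.1 = (Finset.univ : Finset (Fin n)) := by
    apply Finset.eq_univ_of_forall
    intro x
    rcases (B.2.2 x).exists with ⟨j, hj⟩
    exact Finset.mem_biUnion.2 ⟨j, Finset.mem_univ _, hj⟩
  have hsum : ∑ j : Fin n, (B.1 j).card = n := by
    rw [← Finset.card_biUnion (fun a ha b hb hab => hdisj ha hb hab), hcover, Finset.card_univ,
      Fintype.card_fin]
  by_contra h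
  have h1 : ∀ j : Fin n, 1 ≤ (B.1 j).card := fun j => Finset.card_pos.2 (B.2.1 j)
  have hi : 1 < (B.1 i).card := lt_of_le_of_ne (h1 i) (Ne.symm h)
  have : ∑ _j : Fin n, 1 < ∑ j : Fin n, (B.1 j).card :=
    Finset.sum_lt_sum (fun j _ => h1 j) ⟨i, Finset.mem_univ i, hi⟩
  simp [hsum] at this

/-- The unique element of block `i`. -/
noncomputable def elt {n : ℕ} (B : OrderedPartition n n) (i : Fin n) : Fin n :=
  (B.1 i).min' (B.2.1 i)

lemma block_eq {n : ℕ} (B : OrderedPartition n n) (i : Fin n) : B.1 i = {elt B i} := by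
  rcases Finset.card_eq_one.1 (card_eq_one B i) with ⟨a, ha⟩
  have : elt B i = a := by simp [elt, ha]
  rw [this, ha]

lemma elt_injective {n : ℕ} (B : OrderedPartition n n) : Function.Injective (elt B) := by
  intro i j hij
  have hi : elt B i ∈ B.1 i := by rw [block_eq]; exact Finset.mem_singleton_self _
  have hj : elt B i ∈ B.1 j := by rw [hij, block_eq]; exact Finset.mem_singleton_self _
  exact (B.2.2 (elt B i)).unique hi hj

/-- The permutation associated to an ordered partition into `n` singletons. -/
noncomputable def toPerm {n : ℕ} (B : OrderedPartition n n) : Equiv.Perm (Fin n) :=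
  Equiv.ofBijective (elt B) ((Finite.injective_iff_bijective).1 (elt_injective B))

@[simp] lemma toPerm_apply {n : ℕ} (B : OrderedPartition n n) (i : Fin n) :
    toPerm B i = elt B i := rfl

/-- The ordered partition associated to a permutation. -/
def fromPerm {n : ℕ} (σ : Equiv.Perm (Fin n)) : OrderedPartition n n :=
  ⟨fun i => {σ i}, fun i => ⟨σ i, Finset.mem_singleton_self _⟩, fun x =>
    ⟨σ.symm x, by simp, fun j hj => by
      simp only [Finset.mem_singleton] at hj
      simpa using congrArg σ.symm hj.symm⟩⟩

@[simp] lemma fromPerm_coe {n : ℕ} (σ : Equiv.Perm (Fin n)) (i : Fin n) :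
    (fromPerm σ).1 i = {σ i} := rfl

@[simp] lemma toPerm_fromPerm {n : ℕ} (σ : Equiv.Perm (Fin n)) : toPerm (fromPerm σ) = σ := by
  apply Equiv.ext; intro i
  have : elt (fromPerm σ) i ∈ ({σ i} : Finset (Fin n)) := by
    rw [← fromPerm_coe σ i, block_eq (fromPerm σ) i]; exact Finset.mem_singleton_self _
  simpa using this

lemma fromPerm_toPerm {n : ℕ} (B : OrderedPartition n n) : fromPerm (toPerm B) = B := by
  apply Subtype.ext
  funext i
  rw [fromPerm_coe, toPerm_apply, ← block_eq]

lemma fromPerm_surjective {n : ℕ} : Function.Surjective (fromPerm (n := n)) :=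
  fun B => ⟨toPerm B, fromPerm_toPerm B⟩

/-- If two ordered partitions into singletons differ by reindexing with `e`,
their permutations differ by composition with `e`. -/
lemma toPerm_comp {n : ℕ} (P P' : OrderedPartition n n) (e : Equiv.Perm (Fin n))
    (h : P'.1 = P.1 ∘ e) : toPerm P' = toPerm P * e := by
  apply Equiv.ext; intro i
  have h1 : P'.1 i = {elt P (e i)} := by rw [h]; exact block_eq P (e i)
  have h2 : elt P' i ∈ P'.1 i := by rw [block_eq]; exact Finset.mem_singleton_self _
  rw [h1, Finset.mem_singleton] at h2
  simpa using h2

end OPaux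

namespace OPaux
open Finset

----------------------------------------------------------------
-- Part 2: splitBlocks lemmas
----------------------------------------------------------------
variable {n k : ℕ}

@[simp] lemma split_castSucc (B : Fin k → Finset (Fin n)) (i : Fin k) (A A' : Finset (Fin n)) :
    splitBlocks B i A A' i.castSucc = A :=
  Function.update_self _ _ _

@[simp] lemma split_succ (B : Fin k → Finset (Fin n)) (i : Fin k) (A A' : Finset (Fin n)) :
    splitBlocks B i A A' i.succ = A' := by
  rw [splitBlocks, Function.update_of_ne (Fin.castSucc_lt_succ (i := i)).ne', Fin.insertNth_apply_same]

lemma succAbove_eq_castSucc (i : Fin k) : i.succ.succAbove i = i.castSucc :=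
  Fin.succAbove_of_castSucc_lt _ _ (Fin.castSucc_lt_succ (i := i))

lemma split_succAbove (B : Fin k → Finset (Fin n)) (i : Fin k) (A A' : Finset (Fin n))
    {j : Fin k} (hj : j ≠ i) : splitBlocks B i A A' (i.succ.succAbove j) = B j := by
  have hne : i.succ.succAbove j ≠ i.castSucc := by
    rw [← succAbove_eq_castSucc i]
    exact fun h => hj (Fin.succAbove_right_injective h)
  rw [splitBlocks, Function.update_of_ne hne, Fin.insertNth_apply_succAbove]

/-- Forward condition: if a split is an ordered partition then both pieces are nonempty. -/
lemma split_nonempty {B : Fin k → Finset (Fin n)} {i : Fin k} {A A' : Finset (Fin n)}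
    (h : IsOrderedPartition n (k + 1) (splitBlocks B i A A')) : A.Nonempty ∧ A'.Nonempty := by
  constructor
  · have := h.1 i.castSucc; rwa [split_castSucc] at this
  · have := h.1 i.succ; rwa [split_succ] at this

/-- Being an ordered partition is invariant under reindexing the blocks. -/
lemma isOP_comp {B : Fin k → Finset (Fin n)} (e : Equiv.Perm (Fin k))
    (h : IsOrderedPartition n k B) : IsOrderedPartition n k (B ∘ e) := by
  refine ⟨fun i => h.1 (e i), fun x => ?_⟩
  rcases h.2 x with ⟨i, hi, hu⟩
  refine ⟨e.symm i, by simpa using hi, fun j hj => ?_⟩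
  have := hu (e j) hj
  simpa using congrArg e.symm this

lemma split_swap (B : Fin k → Finset (Fin n)) (i : Fin k) (A A' : Finset (Fin n)) :
    splitBlocks B i A' A = splitBlocks B i A A' ∘ (Equiv.swap i.castSucc i.succ) := by
  funext p
  rcases eq_or_ne p i.castSucc with rfl | h1
  · simp [Equiv.swap_apply_left]
  rcases eq_or_ne p i.succ with rfl | h2
  · simp [Equiv.swap_apply_right]
  obtain ⟨j, rfl⟩ := Fin.exists_succAbove_eq h2
  have hj : j ≠ i := fun h => h1 (by rw [h, succAbove_eq_castSucc])
  simp only [Function.comp_apply, Equiv.swap_apply_of_ne_of_ne h1 h2]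
  rw [split_succAbove _ _ _ _ hj, split_succAbove _ _ _ _ hj]

end OPaux

namespace OPaux
open Finset

----------------------------------------------------------------
-- Part 3: the sign functional and φ ∘ d = 0
----------------------------------------------------------------

noncomputable def sgnK (K : Type*) [Field K] {n : ℕ} (B : OrderedPartition n n) : K :=
  ((Equiv.Perm.sign (toPerm B) : ℤ) : K)

noncomputable def phi (K : Type*) [Field K] (n : ℕ) : OPC K n n →ₗ[K] K :=
  Finsupp.lsum K fun B => LinearMap.toSpanSingleton K K (sgnK K B)

lemma phi_single {K : Type*} [Field K] {n : ℕ} (B : OrderedPartition n n) (c : K) :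
    phi K n (Finsupp.single B c) = c * sgnK K B := by
  rw [phi, Finsupp.lsum_single, LinearMap.toSpanSingleton_apply, smul_eq_mul]

lemma sgnK_comp_swap {K : Type*} [Field K] {n : ℕ} (P P' : OrderedPartition n n)
    {a b : Fin n} (hab : a ≠ b) (h : P'.1 = P.1 ∘ (Equiv.swap a b)) :
    sgnK K P' = - sgnK K P := by
  have := toPerm_comp P P' (Equiv.swap a b) h
  rw [sgnK, sgnK, this, map_mul, Equiv.Perm.sign_swap hab]
  push_cast
  ring

lemma phi_d {K : Type*} [Field K] (k : ℕ) (B : OrderedPartition (k + 1) k) :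
    phi K (k + 1) (dOP K (k + 1) k (Finsupp.single B 1)) = 0 := by
  classical
  have hd : dOP K (k + 1) k (Finsupp.single B 1) =
      ∑ i : Fin k, ∑ A ∈ (B.1 i).powerset,
        if h : IsOrderedPartition (k + 1) (k + 1) (splitBlocks B.1 i A (B.1 i \ A)) then
          ((-1 : K) ^ (i : ℕ)) • Finsupp.single (⟨_, h⟩ : OrderedPartition (k + 1) (k + 1)) (1 : K)
        else 0 := by
    rw [dOP, Finsupp.lsum_single, LinearMap.toSpanSingleton_apply, one_smul]
    rfl
  rw [hd]
  erw [map_sum]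
  apply Finset.sum_eq_zero
  intro i _
  erw [map_sum]
  have hab : (i.castSucc : Fin (k + 1)) ≠ i.succ := (Fin.castSucc_lt_succ (i := i)).ne
  refine Finset.sum_involution (fun A _ => B.1 i \ A) ?_ ?_
    (fun A hA => Finset.mem_powerset.2 Finset.sdiff_subset)
    (fun A hA => Finset.sdiff_sdiff_eq_self (Finset.mem_powerset.1 hA))
  · -- pairing cancels
    intro A hA
    have hAs : A ⊆ B.1 i := Finset.mem_powerset.1 hA
    have hA'A : B.1 i \ (B.1 i \ A) = A := Finset.sdiff_sdiff_eq_self hAs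
    rw [hA'A]
    by_cases h : IsOrderedPartition (k + 1) (k + 1) (splitBlocks B.1 i A (B.1 i \ A))
    · have hcomp : splitBlocks B.1 i (B.1 i \ A) A =
          splitBlocks B.1 i A (B.1 i \ A) ∘ (Equiv.swap i.castSucc i.succ) :=
        split_swap _ _ _ _
      have h' : IsOrderedPartition (k + 1) (k + 1) (splitBlocks B.1 i (B.1 i \ A) A) := by
        rw [hcomp]; exact isOP_comp _ h
      erw [dif_pos h, dif_pos h', map_smul, map_smul, phi_single, phi_single]
      have hs : sgnK K (⟨_, h'⟩ : OrderedPartition (k + 1) (k + 1)) =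
          - sgnK K (⟨_, h⟩ : OrderedPartition (k + 1) (k + 1)) :=
        sgnK_comp_swap _ _ hab hcomp
      rw [hs]
      simp [smul_eq_mul]
    · have h' : ¬ IsOrderedPartition (k + 1) (k + 1) (splitBlocks B.1 i (B.1 i \ A) A) := by
        intro hc
        apply h
        have hc2 := isOP_comp (Equiv.swap i.castSucc i.succ) hc
        rwa [← split_swap] at hc2
      erw [dif_neg h, dif_neg h', map_zero, add_zero]
  · -- fixed points have zero contribution
    intro A hA h hgA
    apply h
    have hgA' : B.1 i \ A = A := hgA
    by_cases hOP : IsOrderedPartition (k + 1) (k + 1) (splitBlocks B.1 i A (B.1 i \ A))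
    · exfalso
      rcases (split_nonempty hOP).1 with ⟨a, ha⟩
      have : a ∈ B.1 i \ A := by rw [hgA']; exact ha
      exact (Finset.mem_sdiff.1 this).2 ha
    · erw [dif_neg hOP, map_zero]

lemma phi_comp_d {K : Type*} [Field K] (k : ℕ) :
    (phi K (k + 1)).comp (dOP K (k + 1) k) = 0 := by
  apply Finsupp.lhom_ext
  intro B c
  have : (Finsupp.single B c : OPC K (k+1) k) = c • Finsupp.single B 1 := by
    rw [Finsupp.smul_single, smul_eq_mul, mul_one]
  simp only [LinearMap.comp_apply, this, map_smul, phi_d, smul_zero, LinearMap.zero_apply]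

end OPaux

namespace OPaux
open Finset

----------------------------------------------------------------
-- Part 4: merging two adjacent singleton blocks; the basic relations
----------------------------------------------------------------
variable {m : ℕ}

def mergeB (σ : Equiv.Perm (Fin (m + 1))) (i : Fin m) : Fin m → Finset (Fin (m + 1)) :=
  Function.update (fun j => {σ (i.succ.succAbove j)}) i {σ i.castSucc, σ i.succ}

lemma mergeB_self (σ : Equiv.Perm (Fin (m + 1))) (i : Fin m) :
    mergeB σ i i = {σ i.castSucc, σ i.succ} := Function.update_self _ _ _

lemma mergeB_ne (σ : Equiv.Perm (Fin (m + 1))) (i : Fin m) {j : Fin m} (hj : j ≠ i) :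
    mergeB σ i j = {σ (i.succ.succAbove j)} := Function.update_of_ne hj _ _

lemma mergeB_isOP (σ : Equiv.Perm (Fin (m + 1))) (i : Fin m) :
    IsOrderedPartition (m + 1) m (mergeB σ i) := by
  constructor
  · intro j
    rcases eq_or_ne j i with rfl | hj
    · rw [mergeB_self]; exact Finset.insert_nonempty _ _
    · rw [mergeB_ne σ i hj]; exact Finset.singleton_nonempty _
  · intro x
    have hx : σ (σ.symm x) = x := σ.apply_symm_apply x
    set p := σ.symm x with hp
    rcases eq_or_ne p i.succ with hpsi | hpsi
    · refine ⟨i, ?_, ?_⟩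
      · show x ∈ mergeB σ i i
        rw [mergeB_self, ← hx, hpsi]
        exact Finset.mem_insert_of_mem (Finset.mem_singleton_self _)
      · intro j hj
        have hj : x ∈ mergeB σ i j := hj
        by_contra hji
        rw [mergeB_ne σ i hji, Finset.mem_singleton] at hj
        have hpj : p = i.succ.succAbove j := σ.injective (by rw [hx, hj])
        exact Fin.succAbove_ne i.succ j (by rw [← hpj, hpsi])
    · obtain ⟨j0, hj0⟩ := Fin.exists_succAbove_eq hpsi
      rcases eq_or_ne j0 i with hj0i | hj0i
      · -- p = i.castSucc
        rw [hj0i] at hj0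
        have hpci : p = i.castSucc := by rw [← hj0, succAbove_eq_castSucc]
        refine ⟨i, ?_, ?_⟩
        · show x ∈ mergeB σ i i
          rw [mergeB_self, ← hx, hpci]
          exact Finset.mem_insert_self _ _
        · intro j hj
          have hj : x ∈ mergeB σ i j := hj
          by_contra hji
          rw [mergeB_ne σ i hji, Finset.mem_singleton] at hj
          have hpj : p = i.succ.succAbove j := σ.injective (by rw [hx, hj])
          have : i.succ.succAbove j = i.succ.succAbove i := by
            rw [← hpj, hpci, succAbove_eq_castSucc]
          exact hji (Fin.succAbove_right_injective this)
      · refine ⟨j0, ?_, ?_⟩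
        · show x ∈ mergeB σ i j0
          rw [mergeB_ne σ i hj0i, Finset.mem_singleton, ← hx, hj0]
        · intro j hj
          have hj : x ∈ mergeB σ i j := hj
          rcases eq_or_ne j i with rfl | hji
          · exfalso
            rw [mergeB_self] at hj
            rcases Finset.mem_insert.1 hj with h1 | h1
            · have hpc : p = j.castSucc := σ.injective (by rw [hx, h1])
              have : j.succ.succAbove j0 = j.succ.succAbove j := by
                rw [hj0, hpc, succAbove_eq_castSucc]
              exact hj0i (Fin.succAbove_right_injective this)
            · rw [Finset.mem_singleton] at h1
              exact hpsi (σ.injective (by rw [hx, h1]))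
          · rw [mergeB_ne σ i hji, Finset.mem_singleton] at hj
            have hpj : p = i.succ.succAbove j := σ.injective (by rw [hx, hj])
            have : i.succ.succAbove j = i.succ.succAbove j0 := by rw [← hpj, hj0]
            exact Fin.succAbove_right_injective this

def mergeP (σ : Equiv.Perm (Fin (m + 1))) (i : Fin m) : OrderedPartition (m + 1) m :=
  ⟨mergeB σ i, mergeB_isOP σ i⟩

@[simp] lemma mergeP_coe (σ : Equiv.Perm (Fin (m + 1))) (i : Fin m) :
    (mergeP σ i).1 = mergeB σ i := rfl

lemma split_mergeB (σ : Equiv.Perm (Fin (m + 1))) (i : Fin m) :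
    splitBlocks (mergeB σ i) i {σ i.castSucc} {σ i.succ} = (fromPerm σ).1 := by
  funext p
  rcases eq_or_ne p i.castSucc with rfl | h1
  · rw [split_castSucc, fromPerm_coe]
  rcases eq_or_ne p i.succ with rfl | h2
  · rw [split_succ, fromPerm_coe]
  obtain ⟨j, rfl⟩ := Fin.exists_succAbove_eq h2
  have hj : j ≠ i := fun h => h1 (by rw [h, succAbove_eq_castSucc])
  rw [split_succAbove _ _ _ _ hj, mergeB_ne σ i hj, fromPerm_coe]

lemma split_mergeB' (σ : Equiv.Perm (Fin (m + 1))) (i : Fin m) :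
    splitBlocks (mergeB σ i) i {σ i.succ} {σ i.castSucc} =
      (fromPerm (σ * Equiv.swap i.castSucc i.succ)).1 := by
  rw [split_swap, split_mergeB]
  funext p
  rfl

lemma d_merge (K : Type*) [Field K] (σ : Equiv.Perm (Fin (m + 1))) (i : Fin m) :
    dOP K (m + 1) m (Finsupp.single (mergeP σ i) 1) =
      ((-1 : K) ^ (i : ℕ)) • (Finsupp.single (fromPerm σ) 1 +
        Finsupp.single (fromPerm (σ * Equiv.swap i.castSucc i.succ)) 1) := by
  classical
  set a := σ i.castSucc with haa
  set b := σ i.succ with hbb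
  have hab : a ≠ b := fun h => (Fin.castSucc_lt_succ (i := i)).ne (σ.injective h)
  rw [dOP, Finsupp.lsum_single, LinearMap.toSpanSingleton_apply, one_smul]
  rw [Finset.sum_eq_single_of_mem i (Finset.mem_univ i)]
  · -- the inner sum at i
    have hBi : (mergeP σ i).1 i = {a, b} := mergeB_self σ i
    have hsub : ({({a} : Finset (Fin (m+1))), {b}} : Finset (Finset (Fin (m+1)))) ⊆
        ((mergeP σ i).1 i).powerset := by
      intro A hA
      rw [hBi, Finset.mem_powerset]
      rcases Finset.mem_insert.1 hA with rfl | hA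
      · exact Finset.singleton_subset_iff.2 (Finset.mem_insert_self _ _)
      · rw [Finset.mem_singleton] at hA
        subst hA
        exact Finset.singleton_subset_iff.2 (Finset.mem_insert_of_mem (Finset.mem_singleton_self _))
    rw [← Finset.sum_subset hsub]
    · -- sum over the two-element set
      have hne : ({a} : Finset (Fin (m+1))) ≠ {b} := by
        intro h
        exact hab (Finset.singleton_injective h)
      rw [Finset.sum_pair hne]
      -- term for {a}
      have hsd1 : (mergeP σ i).1 i \ {a} = {b} := by
        rw [hBi]
        ext x
        simp only [Finset.mem_sdiff, Finset.mem_insert, Finset.mem_singleton]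
        constructor
        · rintro ⟨h1 | h1, h2⟩
          · exact absurd h1 h2
          · exact h1
        · rintro rfl
          exact ⟨Or.inr rfl, fun h => hab h.symm⟩
      have hsd2 : (mergeP σ i).1 i \ {b} = {a} := by
        rw [hBi]
        ext x
        simp only [Finset.mem_sdiff, Finset.mem_insert, Finset.mem_singleton]
        constructor
        · rintro ⟨h1 | h1, h2⟩
          · exact h1
          · exact absurd h1 h2
        · rintro rfl
          exact ⟨Or.inl rfl, hab⟩
      have h1 : IsOrderedPartition (m+1) (m+1)
          (splitBlocks (mergeP σ i).1 i {a} ((mergeP σ i).1 i \ {a})) := by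
        rw [hsd1, mergeP_coe, haa, hbb, split_mergeB]
        exact (fromPerm σ).2
      have h2 : IsOrderedPartition (m+1) (m+1)
          (splitBlocks (mergeP σ i).1 i {b} ((mergeP σ i).1 i \ {b})) := by
        rw [hsd2, mergeP_coe, haa, hbb, split_mergeB']
        exact (fromPerm (σ * Equiv.swap i.castSucc i.succ)).2
      erw [dif_pos h1, dif_pos h2]
      have e1 : (⟨_, h1⟩ : OrderedPartition (m+1) (m+1)) = fromPerm σ := by
        apply Subtype.ext
        show splitBlocks (mergeP σ i).1 i {a} ((mergeP σ i).1 i \ {a}) = (fromPerm σ).1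
        rw [hsd1, mergeP_coe]
        exact split_mergeB σ i
      have e2 : (⟨_, h2⟩ : OrderedPartition (m+1) (m+1)) =
          fromPerm (σ * Equiv.swap i.castSucc i.succ) := by
        apply Subtype.ext
        show splitBlocks (mergeP σ i).1 i {b} ((mergeP σ i).1 i \ {b}) =
          (fromPerm (σ * Equiv.swap i.castSucc i.succ)).1
        rw [hsd2, mergeP_coe]
        exact split_mergeB' σ i
      rw [e1, e2, smul_add]
      rfl
    · -- terms outside {{a},{b}} vanish
      intro A hA hA2
      apply dif_neg
      intro h
      obtain ⟨hAne, hA'ne⟩ := split_nonempty h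
      have hAs : A ⊆ {a, b} := by rw [← hBi]; exact Finset.mem_powerset.1 hA
      have hAna : A ≠ {a} := fun h' => hA2 (by rw [h']; exact Finset.mem_insert_self _ _)
      have hAnb : A ≠ {b} := fun h' => hA2 (by
        rw [h']; exact Finset.mem_insert_of_mem (Finset.mem_singleton_self _))
      by_cases hma : a ∈ A <;> by_cases hmb : b ∈ A
      · have hAeq : A = {a, b} := by
          apply Finset.Subset.antisymm hAs
          intro x hx
          rcases Finset.mem_insert.1 hx with rfl | hx
          · exact hma
          · rw [Finset.mem_singleton] at hx; subst hx; exact hmb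
        rw [hBi, hAeq, Finset.sdiff_self] at hA'ne
        exact Finset.not_nonempty_empty hA'ne
      · apply hAna
        apply Finset.Subset.antisymm
        · intro x hx
          rcases Finset.mem_insert.1 (hAs hx) with rfl | hx'
          · exact Finset.mem_singleton_self _
          · rw [Finset.mem_singleton] at hx'; subst hx'; exact absurd hx hmb
        · exact Finset.singleton_subset_iff.2 hma
      · apply hAnb
        apply Finset.Subset.antisymm
        · intro x hx
          rcases Finset.mem_insert.1 (hAs hx) with rfl | hx'
          · exact absurd hx hma
          · exact hx'
        · exact Finset.singleton_subset_iff.2 hmb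
      · rcases hAne with ⟨x, hx⟩
        rcases Finset.mem_insert.1 (hAs hx) with rfl | hx'
        · exact hma hx
        · rw [Finset.mem_singleton] at hx'; subst hx'; exact hmb hx
  · -- the other outer terms vanish
    intro j _ hj
    apply Finset.sum_eq_zero
    intro A hA
    apply dif_neg
    intro h
    obtain ⟨hAne, hA'ne⟩ := split_nonempty h
    have hBj : (mergeP σ i).1 j = {σ (i.succ.succAbove j)} := mergeB_ne σ i hj
    have hAs : A ⊆ {σ (i.succ.succAbove j)} := by rw [← hBj]; exact Finset.mem_powerset.1 hA
    rcases Finset.subset_singleton_iff.1 hAs with rfl | rfl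
    · exact Finset.not_nonempty_empty hAne
    · rw [hBj, Finset.sdiff_self] at hA'ne
      exact Finset.not_nonempty_empty hA'ne

end OPaux


open OPaux

/-- the top cohomology `H^n(C) = C^n / im(d : C^{n−1} → C^n)` of the
ordered-partition complex is a one-dimensional `K`-vector space.  (Here `n ≥ 1` is written
as `m + 1` to avoid natural subtraction in the types; note `C^{n+1} = 0`, so every element
of `C^n` is closed.) -/
theorem statement1 (K : Type*) [Field K] [CharZero K] (m : ℕ) :
    Module.finrank K
      (OPC K (m + 1) (m + 1) ⧸ LinearMap.range (dOP K (m + 1) m)) = 1 := by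
  classical
  set R := LinearMap.range (dOP K (m + 1) m) with hR
  set v : OPC K (m + 1) (m + 1) ⧸ R :=
    Submodule.Quotient.mk (Finsupp.single (fromPerm 1) (1 : K)) with hv
  -- the sign functional kills the image of d
  have hle : R ≤ LinearMap.ker (phi K (m + 1)) := by
    rintro x ⟨y, rfl⟩
    exact LinearMap.congr_fun (phi_comp_d (K := K) m) y
  set phibar := Submodule.liftQ R (phi K (m + 1)) hle with hphibar
  have hpv : phibar v = 1 := by
    rw [hv, hphibar, Submodule.liftQ_apply, phi_single, sgnK, toPerm_fromPerm, map_one]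
    norm_num
  have hvne : v ≠ 0 := by
    intro h
    rw [h, map_zero] at hpv
    exact one_ne_zero hpv.symm
  -- every basis vector lies in the span of v
  have key : ∀ σ : Equiv.Perm (Fin (m + 1)),
      Submodule.Quotient.mk (Finsupp.single (fromPerm σ) (1 : K)) ∈
        Submodule.span K ({v} : Set (OPC K (m + 1) (m + 1) ⧸ R)) := by
    intro σ
    have hσ : σ ∈ Submonoid.closure
        (Set.range fun i : Fin m => Equiv.swap i.castSucc i.succ) := by
      rw [Equiv.Perm.mclosure_swap_castSucc_succ]
      trivial
    have main : ∀ τ ∈ Submonoid.closure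
        (Set.range fun i : Fin m => Equiv.swap i.castSucc i.succ),
        ∀ ρ : Equiv.Perm (Fin (m + 1)),
        Submodule.Quotient.mk (Finsupp.single (fromPerm ρ) (1 : K)) ∈
          Submodule.span K ({v} : Set (OPC K (m + 1) (m + 1) ⧸ R)) →
        Submodule.Quotient.mk (Finsupp.single (fromPerm (ρ * τ)) (1 : K)) ∈
          Submodule.span K ({v} : Set (OPC K (m + 1) (m + 1) ⧸ R)) := by
      intro τ hτ
      induction hτ using Submonoid.closure_induction with
      | mem x hx =>
        rcases hx with ⟨i, rfl⟩
        intro ρ hρ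
        have hmem : (Finsupp.single (fromPerm ρ) (1 : K) +
            Finsupp.single (fromPerm (ρ * Equiv.swap i.castSucc i.succ)) (1 : K)) ∈ R := by
          refine ⟨((-1 : K) ^ (i : ℕ)) • Finsupp.single (mergeP ρ i) 1, ?_⟩
          rw [map_smul, d_merge, smul_smul, ← pow_add]
          rw [Even.neg_one_pow ⟨(i : ℕ), rfl⟩, one_smul]
        have hzero : (Submodule.Quotient.mk (Finsupp.single (fromPerm ρ) (1 : K) +
            Finsupp.single (fromPerm (ρ * Equiv.swap i.castSucc i.succ)) (1 : K)) :
            OPC K (m + 1) (m + 1) ⧸ R) = 0 :=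
          (Submodule.Quotient.mk_eq_zero R).2 hmem
        rw [Submodule.Quotient.mk_add] at hzero
        have heq : (Submodule.Quotient.mk
            (Finsupp.single (fromPerm (ρ * Equiv.swap i.castSucc i.succ)) (1 : K)) :
            OPC K (m + 1) (m + 1) ⧸ R) =
            - Submodule.Quotient.mk (Finsupp.single (fromPerm ρ) (1 : K)) :=
          eq_neg_of_add_eq_zero_right hzero
        rw [heq]
        exact neg_mem hρ
      | one =>
        intro ρ hρ
        rwa [mul_one]
      | mul x hx y hy ihx ihy =>
        intro ρ hρ
        rw [← mul_assoc]
        exact ihy _ (ihx _ hρ)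
    have := main σ hσ 1 (by
      rw [hv]
      exact Submodule.mem_span_singleton_self _)
    rwa [one_mul] at this
  -- conclude
  apply finrank_eq_one v hvne
  intro w
  rcases Submodule.Quotient.mk_surjective R w with ⟨x, rfl⟩
  have hx : (Submodule.Quotient.mk x : OPC K (m + 1) (m + 1) ⧸ R) ∈
      Submodule.span K ({v} : Set (OPC K (m + 1) (m + 1) ⧸ R)) := by
    induction x using Finsupp.induction_linear with
    | zero => rw [Submodule.Quotient.mk_zero]; exact zero_mem _
    | add f g hf hg => rw [Submodule.Quotient.mk_add]; exact add_mem hf hg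
    | single P c =>
      obtain ⟨σ, rfl⟩ := fromPerm_surjective P
      have hsm : (Finsupp.single (fromPerm σ) c : OPC K (m + 1) (m + 1)) =
          c • Finsupp.single (fromPerm σ) 1 := by
        rw [Finsupp.smul_single, smul_eq_mul, mul_one]
      rw [hsm, Submodule.Quotient.mk_smul]
      exact Submodule.smul_mem _ _ (key σ)
  exact Submodule.mem_span_singleton.1 hx
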